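/- Under the bipartisan construction with edge weights w(u, copy of ℓ) = storage cost C^s_ℓ · S + read cost ρ(u) · C^r_ℓ · S, a minimum-weight perfect matching of the left side yields a feasible tier assignment whose total cost equals the minimum total cost over all feasible tier assignments. -/

import Mathlib

/-- A minimum-weight perfect matching of the left side of the bipartite graph
(with edge weights `C^s_ℓ·S + ρ(u)·C^r_ℓ·S`) yields a feasible tier assignment
whose total cost equals the minimum cost over all feasible tier assignments. -/
theorem min_matching_gives_optimal_assignment {U τ : Type*} [Fintype U]
    [Fintype τ] [DecidableEq τ] (Z : τ → ℕ) (B : τ → ℝ) (T : U → ℝ)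
    (Cs Cr : τ → ℝ) (ρ : U → ℝ) (S : ℝ)
    (g : U → (Σ ℓ : τ, Fin (Z ℓ)))
    (hginj : Function.Injective g)
    (hglat : ∀ u, B (g u).1 ≤ T u)
    (hgmin : ∀ g' : U → (Σ ℓ : τ, Fin (Z ℓ)), Function.Injective g' →
      (∀ u, B (g' u).1 ≤ T u) →
      ∑ u, (Cs (g u).1 + ρ u * Cr (g u).1) * S ≤
        ∑ u, (Cs (g' u).1 + ρ u * Cr (g' u).1) * S) :
    ((∀ u, B (g u).1 ≤ T u) ∧
      (∀ ℓ, (Finset.univ.filter fun u => (g u).1 = ℓ).card ≤ Z ℓ)) ∧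
    ∀ f : U → τ, (∀ u, B (f u) ≤ T u) →
      (∀ ℓ, (Finset.univ.filter fun u => f u = ℓ).card ≤ Z ℓ) →
      ∑ u, (Cs (g u).1 + ρ u * Cr (g u).1) * S ≤
        ∑ u, (Cs (f u) + ρ u * Cr (f u)) * S := by
  classical
  constructor
  · refine ⟨hglat, fun ℓ => ?_⟩
    set emb : Fin (Z ℓ) ↪ (Σ ℓ' : τ, Fin (Z ℓ')) :=
      Function.Embedding.sigmaMk (β := fun ℓ : τ => Fin (Z ℓ)) ℓ with hembℓ
    have hcard : ((Finset.univ : Finset (Fin (Z ℓ))).map emb).card = Z ℓ := by simp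
    calc (Finset.univ.filter fun u => (g u).1 = ℓ).card
        ≤ ((Finset.univ : Finset (Fin (Z ℓ))).map emb).card := by
          apply Finset.card_le_card_of_injOn g
          · intro u hu
            simp only [Finset.mem_coe, Finset.mem_filter] at hu
            obtain ⟨-, hu⟩ := hu
            rw [Finset.mem_coe, Finset.mem_map]
            refine ⟨hu ▸ (g u).2, Finset.mem_univ _, ?_⟩
            subst hu
            rfl
          · exact fun a _ b _ h => hginj h
      _ = Z ℓ := hcard
  · intro f hflat hfcap
    -- build an embedding of each fiber of `f` into the slots of its tier
    have hemb : ∀ ℓ : τ, Nonempty ({u : U // f u = ℓ} ↪ Fin (Z ℓ)) := by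
      intro ℓ
      rw [Function.Embedding.nonempty_iff_card_le]
      simpa [Fintype.card_subtype] using hfcap ℓ
    have e : ∀ ℓ : τ, {u : U // f u = ℓ} ↪ Fin (Z ℓ) := fun ℓ => (hemb ℓ).some
    set g' : U → (Σ ℓ : τ, Fin (Z ℓ)) := fun u => ⟨f u, e (f u) ⟨u, rfl⟩⟩ with hg'
    have key : ∀ (u : U) (ℓ : τ) (hu : f u = ℓ), g' u = ⟨ℓ, e ℓ ⟨u, hu⟩⟩ := by
      intro u ℓ hu
      subst hu
      rfl
    have hinj : Function.Injective g' := by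
      intro u v h
      have h1 : f u = f v := congrArg Sigma.fst h
      rw [key u (f v) h1, key v (f v) rfl] at h
      have h2 : e (f v) ⟨u, h1⟩ = e (f v) ⟨v, rfl⟩ := by
        simpa using h
      have h3 := (e (f v)).injective h2
      simpa using congrArg Subtype.val h3
    have hlat : ∀ u, B (g' u).1 ≤ T u := fun u => hflat u
    have := hgmin g' hinj hlat
    simpa using this
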